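/- Let K be a compact Hausdorff space, Γ a set, and h a topological embedding of the Alexandroff duplicate AD(K) into [0,1]^Γ such that c0(Γ) ∩ h(AD(K)) is dense in h(AD(K)). Then the uniform metric fragments h(K × {0}): for every nonempty closed subset C of K and every ε > 0 there exists an open subset U of K such that U ∩ C ≠ ∅ and sup_{γ ∈ Γ} |h(x,0)(γ) − h(y,0)(γ)| ≤ ε for all x, y ∈ U ∩ C. -/
import Mathlib


open Topology Set

universe u v

/-- A space is *M-scattered* if every nonempty subspace contains a nonempty
relatively open second-countable subset. -/
def MScattered (X : Type*) [TopologicalSpace X] : Prop :=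
  ∀ A : Set X, A.Nonempty → ∃ U : Set X, IsOpen U ∧ (A ∩ U).Nonempty ∧
    SecondCountableTopology ↥(A ∩ U)

/-- Corson compact: embeds into the Σ-product of copies of `[0,1]`. -/
def CorsonCompact (K : Type u) [TopologicalSpace K] : Prop :=
  ∃ (Γ : Type u) (f : K → Γ → unitInterval),
    Topology.IsEmbedding f ∧ ∀ k, {γ | f k γ ≠ 0}.Countable

/-- Eberlein compact: embeds into `c₀(Γ)`. -/
def EberleinCompact (K : Type u) [TopologicalSpace K] : Prop :=
  ∃ (Γ : Type u) (f : K → Γ → unitInterval),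
    Topology.IsEmbedding f ∧ ∀ k, ∀ ε : ℝ, 0 < ε → {γ | ε < (f k γ : ℝ)}.Finite

/-- NY compact: embeds into a σ-product of compact metrizable spaces. -/
def NYCompact (K : Type u) [TopologicalSpace K] : Prop :=
  ∃ (Γ : Type u) (X : Γ → Type u) (t : ∀ γ, TopologicalSpace (X γ)),
    (∀ γ, @CompactSpace (X γ) (t γ)) ∧
    (∀ γ, @TopologicalSpace.MetrizableSpace (X γ) (t γ)) ∧
    ∃ (a : ∀ γ, X γ) (f : K → ∀ γ, X γ),
      @Topology.IsEmbedding K (∀ γ, X γ) _ (@Pi.topologicalSpace Γ X t) f ∧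
      ∀ k, {γ | f k γ ≠ a γ}.Finite

/-- ω-Corson compact: embeds into the σ-product of copies of `[0,1]`. -/
def OmegaCorson (K : Type u) [TopologicalSpace K] : Prop :=
  ∃ (Γ : Type u) (f : K → Γ → unitInterval),
    Topology.IsEmbedding f ∧ ∀ k, {γ | f k γ ≠ 0}.Finite

/-- Semi-Eberlein: embeds into `[0,1]^Γ` with `h(K) ∩ c₀(Γ)` dense in `h(K)`. -/
def SemiEberlein (K : Type u) [TopologicalSpace K] : Prop :=
  ∃ (Γ : Type u) (h : K → Γ → unitInterval), Topology.IsEmbedding h ∧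
    Set.range h ⊆
      closure (Set.range h ∩ {x | ∀ ε : ℝ, 0 < ε → {γ | ε < (x γ : ℝ)}.Finite})

/-- ω-Valdivia: embeds into `[0,1]^Γ` with `h(K) ∩ σ([0,1]^Γ)` dense in `h(K)`. -/
def OmegaValdivia (K : Type u) [TopologicalSpace K] : Prop :=
  ∃ (Γ : Type u) (h : K → Γ → unitInterval), Topology.IsEmbedding h ∧
    Set.range h ⊆ closure (Set.range h ∩ {x | {γ | x γ ≠ 0}.Finite})

/-- NY-Valdivia: embeds into a product of Hilbert cubes with the σ-product trace dense. -/
def NYValdivia (K : Type u) [TopologicalSpace K] : Prop :=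
  ∃ (Γ : Type u) (h : K → Γ → ℕ → unitInterval), Topology.IsEmbedding h ∧
    Set.range h ⊆ closure (Set.range h ∩ {x | {γ | x γ ≠ 0}.Finite})

/-- The topology of the Alexandroff duplicate on `X × Bool`: points `(x, true)` are
isolated, and basic neighborhoods of `(x, false)` are `(U × Bool) \ {(x, true)}`. -/
def adTopology (X : Type*) [TopologicalSpace X] : TopologicalSpace (X × Bool) where
  IsOpen V := ∀ x : X, (x, false) ∈ V →
    ∃ U : Set X, IsOpen U ∧ x ∈ U ∧ {p : X × Bool | p.1 ∈ U ∧ p ≠ (x, true)} ⊆ V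
  isOpen_univ := fun x _ => ⟨Set.univ, isOpen_univ, trivial, fun _ _ => trivial⟩
  isOpen_inter := by
    intro V W hV hW x hx
    obtain ⟨U1, hU1, hx1, hs1⟩ := hV x hx.1
    obtain ⟨U2, hU2, hx2, hs2⟩ := hW x hx.2
    exact ⟨U1 ∩ U2, hU1.inter hU2, ⟨hx1, hx2⟩,
      fun p hp => ⟨hs1 ⟨hp.1.1, hp.2⟩, hs2 ⟨hp.1.2, hp.2⟩⟩⟩
  isOpen_sUnion := by
    intro S hS x hx
    obtain ⟨V, hVS, hxV⟩ := hx
    obtain ⟨U, hU, hxU, hsub⟩ := hS V hVS x hxV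
    exact ⟨U, hU, hxU, fun p hp => ⟨V, hVS, hsub hp⟩⟩

/-- A space is metalindelöf if every open cover has a point-countable open refinement. -/
def Metalindelof (X : Type*) [TopologicalSpace X] : Prop :=
  ∀ 𝒰 : Set (Set X), (∀ U ∈ 𝒰, IsOpen U) → ⋃₀ 𝒰 = Set.univ →
    ∃ 𝒱 : Set (Set X), (∀ V ∈ 𝒱, IsOpen V) ∧ ⋃₀ 𝒱 = Set.univ ∧
      (∀ V ∈ 𝒱, ∃ U ∈ 𝒰, V ⊆ U) ∧ ∀ x : X, {V ∈ 𝒱 | x ∈ V}.Countable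

/-- Hereditarily metalindelöf: every subspace is metalindelöf. -/
def HereditarilyMetalindelof (X : Type*) [TopologicalSpace X] : Prop :=
  ∀ A : Set X, Metalindelof ↥A

/-- if `h` embeds the Alexandroff duplicate of `K` into `[0,1]^Γ` with
`c₀(Γ) ∩ h(AD(K))` dense in `h(AD(K))`, then the uniform metric fragments
`h(K × {0})`. -/
theorem uniformMetric_fragments_of_AD_semiEberlein_embedding
    (K : Type u) [TopologicalSpace K] [CompactSpace K] [T2Space K]
    (Γ : Type v) (h : K × Bool → Γ → unitInterval)
    (hemb : @Topology.IsEmbedding (K × Bool) (Γ → unitInterval) (adTopology K) _ h)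
    (hdense : Set.range h ⊆
      closure (Set.range h ∩ {x | ∀ ε : ℝ, 0 < ε → {γ | ε < (x γ : ℝ)}.Finite}))
    (C : Set K) (hC : IsClosed C) (hCne : C.Nonempty) (ε : ℝ) (hε : 0 < ε) :
    ∃ U : Set K, IsOpen U ∧ (U ∩ C).Nonempty ∧
      ∀ x ∈ U ∩ C, ∀ y ∈ U ∩ C, ∀ γ : Γ,
        |(h (x, false) γ : ℝ) - (h (y, false) γ : ℝ)| ≤ ε := by
  classical
  -- Case 1: C has a relatively isolated point.
  by_cases hiso : ∃ (x : K) (U : Set K), IsOpen U ∧ U ∩ C = {x}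
  · obtain ⟨x, U, hU, hUC⟩ := hiso
    refine ⟨U, hU, by rw [hUC]; exact ⟨x, rfl⟩, ?_⟩
    intro a ha b hb γ
    rw [hUC] at ha hb
    rw [mem_singleton_iff] at ha hb
    rw [ha, hb, sub_self, abs_zero]
    exact le_of_lt hε
  push_neg at hiso
  -- continuity of h with respect to the AD topology
  have hcont : @Continuous _ _ (adTopology K) _ h :=
    @Topology.IsEmbedding.continuous (K × Bool) (Γ → unitInterval) h (adTopology K) _ hemb
  -- x ↦ (x, false) is continuous into the AD topology
  have hι : @Continuous K (K × Bool) _ (adTopology K) (fun x => (x, false)) := by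
    refine @Continuous.mk K (K × Bool) _ (adTopology K) _ ?_
    intro s hs
    rw [isOpen_iff_forall_mem_open]
    intro x hx
    obtain ⟨U, hU, hxU, hsub⟩ := hs x hx
    refine ⟨U, fun u hu => hsub ⟨hu, ?_⟩, hU, hxU⟩
    simp
  have hpreim : ∀ s : Set (Γ → unitInterval), IsOpen s → (adTopology K).IsOpen (h ⁻¹' s) :=
    fun s hs => @Continuous.isOpen_preimage _ _ (adTopology K) _ h hcont s hs
  have hιpre : ∀ s : Set (K × Bool), (adTopology K).IsOpen s →
      IsOpen ((fun x : K => (x, false)) ⁻¹' s) :=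
    fun s hs => @Continuous.isOpen_preimage K (K × Bool) _ (adTopology K) _ hι s hs
  have hψ : Continuous (fun x : K => h (x, false)) := by
    constructor
    intro s hs
    exact hιpre _ (hpreim _ hs)
  have hψγ : ∀ γ : Γ, Continuous (fun x : K => (h (x, false) γ : ℝ)) := fun γ =>
    continuous_subtype_val.comp ((continuous_apply γ).comp hψ)
  -- every isolated point maps into c₀
  have hc0 : ∀ y : K, ∀ δ : ℝ, 0 < δ → {γ | δ < (h (y, true) γ : ℝ)}.Finite := by
    intro y
    have hopen : @IsOpen _ (adTopology K) {(y, true)} := by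
      intro x hx
      simp at hx
    obtain ⟨t, ht, hpre⟩ :=
      (@Topology.IsInducing.isOpen_iff (K × Bool) (Γ → unitInterval) h _ (adTopology K)
        (@Topology.IsEmbedding.toIsInducing (K × Bool) (Γ → unitInterval) (adTopology K) _ h hemb)
        {(y, true)}).mp hopen
    have hmem : h (y, true) ∈ t := by
      have : (y, true) ∈ h ⁻¹' t := by rw [hpre]; rfl
      exact this
    have hclos := hdense (Set.mem_range_self (y, true))
    obtain ⟨w, hwt, hw⟩ := mem_closure_iff.mp hclos t ht hmem
    obtain ⟨p, hp⟩ := hw.1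
    have hpmem : p ∈ h ⁻¹' t := by show h p ∈ t; rw [hp]; exact hwt
    rw [hpre, mem_singleton_iff] at hpmem
    subst hpmem
    intro δ hδ
    have := hw.2 δ hδ
    rwa [← hp] at this
  -- the fragmentation predicate
  set Pp : ℕ → K → Prop := fun n x =>
    ∃ s : Finset Γ, s.card ≤ n ∧ ∀ γ, ε < (h (x, false) γ : ℝ) → γ ∈ s with hPp
  set Qp : ℕ → K → Prop := fun n y =>
    ∃ s : Finset Γ, s.card ≤ n ∧ ∀ γ, ε < (h (y, true) γ : ℝ) → γ ∈ s with hQp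
  -- key transfer lemma
  have key : ∀ (n : ℕ) (S : Set K) (x : K), x ∉ S → (∀ y ∈ S, Qp n y) →
      x ∈ closure S → Pp n x := by
    intro n S x hxS hS hxcl
    have claim : ∀ t : Finset Γ, (∀ γ ∈ t, ε < (h (x, false) γ : ℝ)) → t.card ≤ n := by
      intro t ht
      have hNopen : IsOpen {w : Γ → unitInterval | ∀ γ ∈ t, ε < (w γ : ℝ)} := by
        have heq : {w : Γ → unitInterval | ∀ γ ∈ t, ε < (w γ : ℝ)} =
            ⋂ γ ∈ t, {w : Γ → unitInterval | ε < (w γ : ℝ)} := by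
          ext w; simp
        rw [heq]
        exact isOpen_biInter_finset fun γ _ =>
          isOpen_lt continuous_const (continuous_subtype_val.comp (continuous_apply γ))
      have hpre : (adTopology K).IsOpen
          (h ⁻¹' {w : Γ → unitInterval | ∀ γ ∈ t, ε < (w γ : ℝ)}) :=
        hpreim _ hNopen
      obtain ⟨U, hU, hxU, hsub⟩ := hpre x ht
      obtain ⟨y, hyU, hyS⟩ := mem_closure_iff.mp hxcl U hU hxU
      have hyx : y ≠ x := fun he => hxS (he ▸ hyS)
      have hyN : h (y, true) ∈ {w : Γ → unitInterval | ∀ γ ∈ t, ε < (w γ : ℝ)} := by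
        refine hsub ⟨hyU, ?_⟩
        simp [Prod.ext_iff, hyx]
      obtain ⟨s, hscard, hscap⟩ := hS y hyS
      exact le_trans (Finset.card_le_card fun γ hγ => hscap γ (hyN γ hγ)) hscard
    have hfin : {γ | ε < (h (x, false) γ : ℝ)}.Finite := by
      by_contra hinf
      obtain ⟨t, hts, htc⟩ := Set.Infinite.exists_subset_card_eq hinf (n + 1)
      have := claim t fun γ hγ => hts hγ
      omega
    refine ⟨hfin.toFinset, claim hfin.toFinset fun γ hγ => ?_, fun γ hγ => ?_⟩
    · exact hfin.mem_toFinset.mp hγ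
    · exact hfin.mem_toFinset.mpr hγ
  -- Baire category argument on C
  haveI : CompactSpace ↥C := isCompact_iff_compactSpace.mp hC.isCompact
  haveI : Nonempty ↥C := hCne.to_subtype
  have hcover : ⋃ n : ℕ, closure ((fun z : ↥C => (z : K)) ⁻¹' {y | Qp n y}) = univ := by
    rw [eq_univ_iff_forall]
    intro z
    have hfz : {γ | ε < (h ((z : K), true) γ : ℝ)}.Finite := hc0 z ε hε
    refine mem_iUnion.mpr ⟨hfz.toFinset.card, subset_closure ?_⟩
    exact ⟨hfz.toFinset, le_refl _, fun γ hγ => hfz.mem_toFinset.mpr hγ⟩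
  obtain ⟨n, hn⟩ := nonempty_interior_of_iUnion_of_closed
    (fun n : ℕ => isClosed_closure (s := (fun z : ↥C => (z : K)) ⁻¹' {y | Qp n y})) hcover
  obtain ⟨O, hO, hOpre⟩ := isOpen_induced_iff.mp
    (isOpen_interior (s := closure ((fun z : ↥C => (z : K)) ⁻¹' {y | Qp n y})))
  -- membership in O ∩ C gives closure membership
  have hOcl : ∀ x (hxC : x ∈ C), x ∈ O → x ∈ closure ({y | Qp n y} ∩ C) := by
    intro x hxC hxO
    have hxi : (⟨x, hxC⟩ : ↥C) ∈ interior (closure ((fun z : ↥C => (z : K)) ⁻¹' {y | Qp n y})) := by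
      have hx' : (⟨x, hxC⟩ : ↥C) ∈ Subtype.val ⁻¹' O := hxO
      rwa [hOpre] at hx'
    have := closure_subtype.mp (interior_subset hxi)
    refine closure_mono ?_ this
    rintro w ⟨z, hz, rfl⟩
    exact ⟨hz, z.2⟩
  -- on O ∩ C every point satisfies Pp n
  have hPn : ∀ x ∈ O ∩ C, Pp n x := by
    rintro x ⟨hxO, hxC⟩
    by_cases hx2 : x ∈ closure (({y | Qp n y} ∩ C) \ {x})
    · exact key n _ x (fun hmem => hmem.2 rfl) (fun y hy => hy.1.1) hx2
    · exfalso
      rw [mem_closure_iff] at hx2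
      push_neg at hx2
      obtain ⟨V, hVopen, hxV, hVdisj⟩ := hx2
      refine hiso x (O ∩ V) (hO.inter hVopen) ?_
      ext z
      constructor
      · rintro ⟨⟨hzO, hzV⟩, hzC⟩
        have hzcl : z ∈ closure ({y | Qp n y} ∩ C) := hOcl z hzC hzO
        have hz2 : z ∈ closure (V ∩ ({y | Qp n y} ∩ C)) :=
          hVopen.inter_closure ⟨hzV, hzcl⟩
        have hsub : V ∩ ({y | Qp n y} ∩ C) ⊆ {x} := by
          intro w hw
          by_contra hwx
          have : w ∈ V ∩ (({y | Qp n y} ∩ C) \ {x}) := ⟨hw.1, hw.2, hwx⟩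
          rw [hVdisj] at this
          exact this
        have := closure_mono hsub hz2
        rwa [closure_singleton] at this
      · rintro rfl
        exact ⟨⟨hxO, hxV⟩, hxC⟩
  -- O ∩ C is nonempty
  obtain ⟨z0, hz0⟩ := hn
  have hz0O : (z0 : K) ∈ O := by rw [← hOpre] at hz0; exact hz0
  have hOCne : (O ∩ C).Nonempty := ⟨z0, hz0O, z0.2⟩
  -- minimal n
  have hex : ∃ m : ℕ, ∃ O' : Set K, IsOpen O' ∧ (O' ∩ C).Nonempty ∧ ∀ x ∈ O' ∩ C, Pp m x :=
    ⟨n, O, hO, hOCne, hPn⟩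
  obtain ⟨O₀, hO₀, hne₀, hP₀⟩ := Nat.find_spec hex
  set n₀ := Nat.find hex with hn₀
  rcases Nat.eq_zero_or_pos n₀ with h0 | hpos
  · -- n₀ = 0 : everything is below ε
    refine ⟨O₀, hO₀, hne₀, ?_⟩
    intro x hx y hy γ
    obtain ⟨sx, hsxc, hsx⟩ := hP₀ x hx
    obtain ⟨sy, hsyc, hsy⟩ := hP₀ y hy
    rw [h0] at hsxc hsyc
    have hxle : (h (x, false) γ : ℝ) ≤ ε := by
      by_contra hlt
      push_neg at hlt
      have := hsx γ hlt
      rw [Finset.card_eq_zero.mp (Nat.le_zero.mp hsxc)] at this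
      exact absurd this (Finset.notMem_empty γ)
    have hyle : (h (y, false) γ : ℝ) ≤ ε := by
      by_contra hlt
      push_neg at hlt
      have := hsy γ hlt
      rw [Finset.card_eq_zero.mp (Nat.le_zero.mp hsyc)] at this
      exact absurd this (Finset.notMem_empty γ)
    have hx0 : (0 : ℝ) ≤ (h (x, false) γ : ℝ) := (h (x, false) γ).2.1
    have hy0 : (0 : ℝ) ≤ (h (y, false) γ : ℝ) := (h (y, false) γ).2.1
    rw [abs_sub_le_iff]
    constructor <;> linarith
  · -- n₀ ≥ 1
    have hmin := Nat.find_min hex (show n₀ - 1 < n₀ by omega)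
    push_neg at hmin
    obtain ⟨x₀, hx₀, hnP⟩ := hmin O₀ hO₀ hne₀
    obtain ⟨s₀, hs₀c, hs₀⟩ := hP₀ x₀ hx₀
    have hTfin : {γ | ε < (h (x₀, false) γ : ℝ)}.Finite :=
      Set.Finite.subset s₀.finite_toSet fun γ hγ => hs₀ γ hγ
    set G := hTfin.toFinset with hG
    have hGcard : n₀ ≤ G.card := by
      by_contra hlt
      push_neg at hlt
      exact hnP ⟨G, by omega, fun γ hγ => hTfin.mem_toFinset.mpr hγ⟩
    set U : Set K := O₀ ∩ ⋂ γ ∈ G, {x | ε < (h (x, false) γ : ℝ) ∧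
        |(h (x, false) γ : ℝ) - (h (x₀, false) γ : ℝ)| < ε / 2} with hU
    have hUopen : IsOpen U := by
      refine hO₀.inter (isOpen_biInter_finset fun γ _ => IsOpen.and ?_ ?_)
      · exact isOpen_lt continuous_const (hψγ γ)
      · exact isOpen_lt (((hψγ γ).sub continuous_const).abs) continuous_const
    have hx₀U : x₀ ∈ U := by
      refine ⟨hx₀.1, mem_iInter₂.mpr fun γ hγ => ⟨hTfin.mem_toFinset.mp hγ, ?_⟩⟩
      rw [sub_self, abs_zero]
      linarith
    have hUloc : ∀ x ∈ U ∩ C, ∀ γ ∈ G, ε < (h (x, false) γ : ℝ) ∧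
        |(h (x, false) γ : ℝ) - (h (x₀, false) γ : ℝ)| < ε / 2 := by
      rintro x ⟨⟨_, hxI⟩, _⟩ γ hγ
      exact mem_iInter₂.mp hxI γ hγ
    have hout : ∀ x ∈ U ∩ C, ∀ γ, γ ∉ G → (h (x, false) γ : ℝ) ≤ ε := by
      intro x hx γ hγG
      by_contra hlt
      push_neg at hlt
      obtain ⟨s, hsc, hs⟩ := hP₀ x ⟨hx.1.1, hx.2⟩
      have hsubset : insert γ G ⊆ s := by
        intro γ' hγ'
        rcases Finset.mem_insert.mp hγ' with rfl | hγ'G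
        · exact hs γ' hlt
        · exact hs γ' (hUloc x hx γ' hγ'G).1
      have hcard : (insert γ G).card = G.card + 1 := Finset.card_insert_of_notMem hγG
      have := Finset.card_le_card hsubset
      omega
    refine ⟨U, hUopen, ⟨x₀, hx₀U, hx₀.2⟩, ?_⟩
    intro x hx y hy γ
    by_cases hγ : γ ∈ G
    · have h1 := (hUloc x hx γ hγ).2
      have h2 := (hUloc y hy γ hγ).2
      have h3 := abs_sub_le (h (x, false) γ : ℝ) (h (x₀, false) γ : ℝ) (h (y, false) γ : ℝ)
      have h4 := abs_sub_comm (h (y, false) γ : ℝ) (h (x₀, false) γ : ℝ)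
      rw [abs_sub_comm] at h2
      linarith
    · have h1 := hout x hx γ hγ
      have h2 := hout y hy γ hγ
      have hx0 : (0 : ℝ) ≤ (h (x, false) γ : ℝ) := (h (x, false) γ).2.1
      have hy0 : (0 : ℝ) ≤ (h (y, false) γ : ℝ) := (h (y, false) γ).2.1
      rw [abs_sub_le_iff]
      constructor <;> linarith
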